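/- For a bounded linear operator T on C([0,ω₁]), the following are equivalent: (i) the range of T is a separable subset of C([0,ω₁]); (ii) T ∈ G_{C([0,σ])}(C([0,ω₁])) for some countable ordinal σ; (iii) T ∈ \overline{G}_{C([0,σ])}(C([0,ω₁])) for some countable ordinal σ. -/

import Mathlib

set_option synthInstance.maxHeartbeats 1000000
set_option maxHeartbeats 2000000

noncomputable section
open Set Ordinal

/-- `ω₁`, the first uncountable ordinal. -/
abbrev omega1 : Ordinal.{0} := Ordinal.omega 1

/-- Every ordinal interval `[0, o]` is a compact space in its (inherited) order topology. -/
instance (o : Ordinal) : CompactSpace (Set.Iic o) := by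
  have h : IsCompact (Set.Iic o) := by
    have := isCompact_Icc (a := (⊥ : Ordinal)) (b := o)
    rwa [Set.Icc_bot] at this
  exact isCompact_iff_compactSpace.mp h

/-- The Banach space `C([0, ω₁])` of continuous real-valued functions on `[0, ω₁]`,
with the supremum norm. -/
abbrev CC := C(Set.Iic omega1, ℝ)

/-- `G_Z(C([0,ω₁]))`: the ideal of operators factoring through `Z`, i.e. the linear span of
the operators of the form `R ∘ S` with `S : C([0,ω₁]) → Z` and `R : Z → C([0,ω₁])`. -/
def GIdeal (Z : Type*) [NormedAddCommGroup Z] [NormedSpace ℝ Z] :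
    Submodule ℝ (CC →L[ℝ] CC) :=
  Submodule.span ℝ {T : CC →L[ℝ] CC | ∃ (S : CC →L[ℝ] Z) (R : Z →L[ℝ] CC), T = R.comp S}

namespace SepRangeAux

open TopologicalSpace Cardinal

theorem succ_lt_omega1 {σ : Ordinal.{0}} (hσ : σ < omega1) : σ + 1 < omega1 := by
  rw [Ordinal.add_one_eq_succ]
  exact (isSuccLimit_omega 1).succ_lt hσ

theorem countable_Iic_of_lt_omega1 {σ : Ordinal.{0}} (hσ : σ < omega1) :
    Countable (Set.Iic σ) := by
  have h1 : Set.Iic σ ⊆ Set.Iio (σ + 1) := fun x hx => lt_of_le_of_lt hx (Order.lt_succ σ)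
  have h2 : (Set.Iio (σ + 1)).Countable := by
    rw [countable_iff_lt_aleph_one, Cardinal.mk_Iio_ordinal]
    have h3 : (σ + 1).card < ℵ₁ := by
      rw [← Cardinal.lt_ord, ord_aleph]; exact succ_lt_omega1 hσ
    have := Cardinal.lift_lt.{0,1}.mpr h3
    rwa [lift_aleph, Ordinal.lift_one] at this
  exact (h2.mono h1).to_subtype

theorem sc_of_countable {α : Type*} [TopologicalSpace α] [LinearOrder α] [OrderTopology α]
    [Countable α] : SecondCountableTopology α := by
  refine ⟨⟨{ s | ∃ a, s = Ioi a ∨ s = Iio a }, ?_, OrderTopology.topology_eq_generate_intervals⟩⟩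
  have h : { s : Set α | ∃ a, s = Ioi a ∨ s = Iio a } ⊆ range Ioi ∪ range Iio := by
    rintro s ⟨a, h | h⟩
    · exact Or.inl ⟨a, h.symm⟩
    · exact Or.inr ⟨a, h.symm⟩
  exact ((countable_range _).union (countable_range _)).mono h

theorem separableSpace_C_Iic {σ : Ordinal.{0}} (hσ : σ < omega1) :
    SeparableSpace C(Set.Iic σ, ℝ) := by
  have := countable_Iic_of_lt_omega1 hσ
  have : SecondCountableTopology (Set.Iic σ) := sc_of_countable
  infer_instance

/-- every continuous function on `[0, ω₁]` is eventually constant -/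
theorem eventually_const (f : CC) :
    ∃ σ, σ < omega1 ∧ ∀ x : Set.Iic omega1, σ ≤ x.1 → f x = f ⟨omega1, self_mem_Iic⟩ := by
  set topE : Set.Iic omega1 := ⟨omega1, self_mem_Iic⟩ with htopE
  have hcont : ContinuousAt f topE := f.continuous.continuousAt
  have hex : ∀ n : ℕ, ∃ l : Set.Iic omega1, l < topE ∧
      ∀ x ∈ Set.Ioc l topE, |f x - f topE| < 1/(n+1) := by
    intro n
    have hU : f ⁻¹' Metric.ball (f topE) (1/(n+1)) ∈ nhds topE :=
      hcont (Metric.ball_mem_nhds _ (by positivity))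
    obtain ⟨l, hl, hsub⟩ := exists_Ioc_subset_of_mem_nhds hU
      ⟨⟨0, bot_le.trans_lt (omega_pos 1) |>.le⟩, Subtype.mk_lt_mk.2 (omega_pos 1)⟩
    exact ⟨l, hl, fun x hx => by simpa [Metric.mem_ball, Real.dist_eq] using hsub hx⟩
  choose l hl hfl using hex
  set g : ℕ → Ordinal := fun n => (l n).1
  have hg : ∀ n, g n < omega1 := fun n => Subtype.coe_lt_coe.2 (hl n)
  have hsup : iSup g < omega1 := by
    exact Ordinal.iSup_lt_omega_one hg
  have hkey : ∀ x : Set.Iic omega1, iSup g < x.1 → f x = f topE := by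
    intro x hx
    have hx2 : x.1 ≤ omega1 := x.2
    rcases hx2.lt_or_eq with hlt | heq
    swap
    · have : x = topE := Subtype.ext heq
      rw [this]
    have habs : ∀ n : ℕ, |f x - f topE| < 1/(n+1) := by
      intro n
      apply hfl n x
      constructor
      · exact Subtype.coe_lt_coe.1 ((Ordinal.le_iSup g n).trans_lt hx)
      · exact Subtype.coe_le_coe.1 hx2
    have : |f x - f topE| ≤ 0 := by
      by_contra hpos
      push_neg at hpos
      obtain ⟨n, hn⟩ := exists_nat_one_div_lt hpos
      exact absurd (habs n) (not_lt.2 hn.le)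
    have := abs_nonpos_iff.mp this
    linarith [sub_eq_zero.mp this]
  refine ⟨iSup g + 1, succ_lt_omega1 hsup, fun x hx => ?_⟩
  exact hkey x (lt_of_lt_of_le (Order.lt_succ _) (by rwa [← Ordinal.add_one_eq_succ]))

/-- uniform eventual constancy on a separable set -/
theorem eventually_const_of_isSeparable {s : Set CC} (hs : IsSeparable s) :
    ∃ σ, σ < omega1 ∧ ∀ f ∈ s, ∀ x y : Set.Iic omega1,
      σ ≤ x.1 → σ ≤ y.1 → f x = f y := by
  obtain ⟨c, hc, hsc⟩ := hs
  rcases c.eq_empty_or_nonempty with rfl | hne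
  · exact ⟨0, omega_pos 1, fun f hf => by simpa using hsc hf⟩
  obtain ⟨e, rfl⟩ := hc.exists_eq_range hne
  choose σd hσd hconst using fun n : ℕ => eventually_const (e n)
  have hsup : iSup σd < omega1 := by
    exact Ordinal.iSup_lt_omega_one hσd
  refine ⟨iSup σd, hsup, fun f hf x y hx hy => ?_⟩
  have hfc := hsc hf
  have key : ∀ n : ℕ, e n x = e n y := by
    intro n
    have h1 := hconst n x (le_trans (Ordinal.le_iSup σd n) hx)
    have h2 := hconst n y (le_trans (Ordinal.le_iSup σd n) hy)
    rw [h1, h2]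
  have hdist : ∀ ε > (0:ℝ), |f x - f y| ≤ 2 * ε := by
    intro ε hε
    obtain ⟨d, hd, hfd⟩ := Metric.mem_closure_iff.1 hfc ε hε
    obtain ⟨n, rfl⟩ := hd
    have h1 : |f x - e n x| ≤ dist f (e n) := by
      have := ContinuousMap.dist_apply_le_dist (f := f) (g := e n) x
      rwa [Real.dist_eq] at this
    have h2 : |e n y - f y| ≤ dist f (e n) := by
      have := ContinuousMap.dist_apply_le_dist (f := f) (g := e n) y
      rw [Real.dist_eq] at this
      rw [abs_sub_comm]; exact this
    have h3 := key n
    have h4 : |f x - f y| ≤ |f x - e n x| + (|e n x - e n y| + |e n y - f y|) := by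
      refine (abs_sub_le _ (e n x) _).trans ?_
      gcongr
      exact abs_sub_le _ (e n y) _
    rw [h3] at h1 h4
    have h5 : |(e n) y - (e n) y| = (0:ℝ) := by simp
    rw [h5] at h4
    linarith
  have habs : |f x - f y| ≤ 0 := by
    by_contra hpos
    push_neg at hpos
    have := hdist (|f x - f y| / 4) (by linarith)
    linarith
  have := abs_nonpos_iff.mp habs
  linarith [sub_eq_zero.mp this]

/-- inclusion `[0,σ] → [0,ω₁]` -/
def incl {σ : Ordinal.{0}} (hσ : σ ≤ omega1) : C(Set.Iic σ, Set.Iic omega1) :=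
  ⟨fun x => ⟨x.1, x.2.trans hσ⟩, by exact Continuous.subtype_mk continuous_subtype_val _⟩

/-- retraction `[0,ω₁] → [0,σ]`, `x ↦ min x σ` -/
def retr (σ : Ordinal.{0}) : C(Set.Iic omega1, Set.Iic σ) :=
  ⟨fun x => ⟨min x.1 σ, Set.mem_Iic.2 (min_le_right _ _)⟩, by
    exact Continuous.subtype_mk (continuous_subtype_val.min continuous_const) _⟩

/-- restriction operator -/
def resL {σ : Ordinal.{0}} (hσ : σ ≤ omega1) : CC →L[ℝ] C(Set.Iic σ, ℝ) :=
  LinearMap.mkContinuous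
    { toFun := fun f => f.comp (incl hσ)
      map_add' := fun f g => rfl
      map_smul' := fun c f => rfl } 1
    (fun f => by
      rw [one_mul]
      refine ContinuousMap.norm_le _ (norm_nonneg f) |>.2 fun x => ?_
      exact f.norm_coe_le_norm _)

/-- extension operator -/
def extL (σ : Ordinal.{0}) : C(Set.Iic σ, ℝ) →L[ℝ] CC :=
  LinearMap.mkContinuous
    { toFun := fun g => g.comp (retr σ)
      map_add' := fun f g => rfl
      map_smul' := fun c f => rfl } 1
    (fun g => by
      rw [one_mul]
      refine ContinuousMap.norm_le _ (norm_nonneg g) |>.2 fun x => ?_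
      exact g.norm_coe_le_norm _)

theorem factor_of_const {σ : Ordinal.{0}} (hσ : σ < omega1) (T : CC →L[ℝ] CC)
    (h : ∀ f : CC, ∀ x y : Set.Iic omega1, σ ≤ x.1 → σ ≤ y.1 → T f x = T f y) :
    T ∈ GIdeal (C(Set.Iic σ, ℝ)) := by
  apply Submodule.subset_span
  refine ⟨(resL hσ.le).comp T, extL σ, ?_⟩
  ext f x
  simp only [ContinuousLinearMap.comp_apply]
  show T f x = ((T f).comp (incl hσ.le)).comp (retr σ) x
  simp only [ContinuousMap.comp_apply]
  show T f x = T f ⟨min x.1 σ, (min_le_right _ _).trans hσ.le⟩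
  rcases le_or_gt x.1 σ with hx | hx
  · congr 1
    exact Subtype.ext (min_eq_left hx).symm
  · exact h f x _ hx.le (le_of_eq (min_eq_right hx.le).symm)

theorem isSeparable_range_of_mem_GIdeal {Z : Type*} [NormedAddCommGroup Z] [NormedSpace ℝ Z]
    [SeparableSpace Z] {T : CC →L[ℝ] CC} (hT : T ∈ GIdeal Z) :
    IsSeparable (Set.range T) := by
  refine Submodule.span_induction ?_ ?_ ?_ ?_ hT
  · rintro x ⟨S, R, rfl⟩
    have : IsSeparable (Set.range R) := isSeparable_range R.continuous
    exact this.mono (by rintro _ ⟨f, rfl⟩; exact ⟨S f, rfl⟩)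
  · exact (Set.countable_singleton 0).isSeparable.mono (by rintro _ ⟨f, rfl⟩; simp)
  · intro A B _ _ hA hB
    have : Set.range ⇑(A + B) ⊆ (fun p : CC × CC => p.1 + p.2) '' (Set.range A ×ˢ Set.range B) := by
      rintro _ ⟨f, rfl⟩
      exact ⟨(A f, B f), ⟨⟨f, rfl⟩, ⟨f, rfl⟩⟩, rfl⟩
    exact ((hA.prod hB).image (continuous_add)).mono this
  · intro a A _ hA
    have : Set.range ⇑(a • A) ⊆ (fun y : CC => a • y) '' (Set.range A) := by
      rintro _ ⟨f, rfl⟩; exact ⟨A f, ⟨f, rfl⟩, rfl⟩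
    exact (hA.image (continuous_const_smul a)).mono this

theorem isSeparable_range_of_mem_closure {Z : Type*} [NormedAddCommGroup Z] [NormedSpace ℝ Z]
    [SeparableSpace Z] {T : CC →L[ℝ] CC}
    (hT : T ∈ closure (GIdeal Z : Set (CC →L[ℝ] CC))) :
    IsSeparable (Set.range T) := by
  have hexist : ∀ n : ℕ, ∃ A ∈ (GIdeal Z : Set (CC →L[ℝ] CC)), dist T A < 1/(n+1) :=
    fun n => Metric.mem_closure_iff.1 hT _ (by positivity)
  choose A hA hdA using hexist
  have hsep : ∀ n, IsSeparable (Set.range (A n)) :=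
    fun n => isSeparable_range_of_mem_GIdeal (hA n)
  have hsub : Set.range T ⊆ closure (⋃ n, Set.range (A n)) := by
    rintro _ ⟨f, rfl⟩
    rw [Metric.mem_closure_iff]
    intro ε hε
    obtain ⟨n, hn⟩ := exists_nat_one_div_lt (div_pos hε (by positivity : (0:ℝ) < ‖f‖ + 1))
    refine ⟨A n f, Set.mem_iUnion.2 ⟨n, ⟨f, rfl⟩⟩, ?_⟩
    have h1 : dist (T f) (A n f) ≤ dist T (A n) * ‖f‖ := by
      have hd : dist T (A n) = ‖T - A n‖ := dist_eq_norm T (A n)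
      rw [dist_eq_norm, hd]
      calc ‖T f - A n f‖ = ‖(T - A n) f‖ := by simp
        _ ≤ ‖T - A n‖ * ‖f‖ := (T - A n).le_opNorm f
    have h2 : dist T (A n) * ‖f‖ < ε := by
      have hlt : dist T (A n) < ε / (‖f‖ + 1) := (hdA n).trans hn
      have hd0 : (0:ℝ) ≤ dist T (A n) := dist_nonneg
      calc dist T (A n) * ‖f‖ ≤ dist T (A n) * (‖f‖ + 1) := by nlinarith [norm_nonneg f]
        _ < (ε / (‖f‖ + 1)) * (‖f‖ + 1) := by
            apply mul_lt_mul_of_pos_right hlt (by positivity)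
        _ = ε := by field_simp
    exact lt_of_le_of_lt h1 h2
  exact ((IsSeparable.iUnion hsep).closure).mono hsub

end SepRangeAux

/-- For an operator `T` on `C([0,ω₁])` the following are equivalent: (i) `T` has separable
range; (ii) `T ∈ G_{C([0,σ])}` for some countable ordinal `σ`; (iii) `T` lies in the norm
closure of `G_{C([0,σ])}` for some countable ordinal `σ`. -/

theorem separable_range_iff_factors_through_C_Iic (T : CC →L[ℝ] CC) :
    (TopologicalSpace.IsSeparable (Set.range T) ↔
      ∃ σ < omega1, T ∈ GIdeal (C(Set.Iic σ, ℝ))) ∧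
    ((∃ σ < omega1, T ∈ GIdeal (C(Set.Iic σ, ℝ))) ↔
      ∃ σ < omega1, T ∈ closure (GIdeal (C(Set.Iic σ, ℝ)) : Set (CC →L[ℝ] CC))) := by
  have fwd : TopologicalSpace.IsSeparable (Set.range T) →
      ∃ σ < omega1, T ∈ GIdeal (C(Set.Iic σ, ℝ)) := by
    intro hsep
    obtain ⟨σ, hσ, hconst⟩ := SepRangeAux.eventually_const_of_isSeparable hsep
    exact ⟨σ, hσ, SepRangeAux.factor_of_const hσ T
      (fun f x y hx hy => hconst (T f) ⟨f, rfl⟩ x y hx hy)⟩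
  have bwd : (∃ σ < omega1, T ∈ GIdeal (C(Set.Iic σ, ℝ))) →
      TopologicalSpace.IsSeparable (Set.range T) := by
    rintro ⟨σ, hσ, hmem⟩
    have := SepRangeAux.separableSpace_C_Iic hσ
    exact SepRangeAux.isSeparable_range_of_mem_GIdeal hmem
  have bwd' : (∃ σ < omega1, T ∈ closure (GIdeal (C(Set.Iic σ, ℝ)) : Set (CC →L[ℝ] CC))) →
      TopologicalSpace.IsSeparable (Set.range T) := by
    rintro ⟨σ, hσ, hmem⟩
    have := SepRangeAux.separableSpace_C_Iic hσ
    exact SepRangeAux.isSeparable_range_of_mem_closure hmem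
  refine ⟨⟨fwd, bwd⟩, ⟨?_, fun h => fwd (bwd' h)⟩⟩
  rintro ⟨σ, hσ, hmem⟩
  exact ⟨σ, hσ, subset_closure hmem⟩
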